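/- Let C : ℝ → (real symmetric 3×3 matrices), λ_a : ℝ → (0,∞) and N_a : ℝ → ℝ³ (a = 1,2,3) be differentiable at t₀, with C(t) N_a(t) = λ_a(t)² N_a(t), ⟨N_a(t), N_b(t)⟩ = δ_{ab} for all t near t₀, and λ₁(t₀)², λ₂(t₀)², λ₃(t₀)² pairwise distinct. Let E : (0,∞) → ℝ be differentiable. Then, at t₀: (i) (λ_a²)' = ⟨N_a, C' N_a⟩ for each a; and (ii) the generalized strain curve 𝐄(t) := Σ_a E(λ_a(t)) N_a(t) N_a(t)ᵀ satisfies 𝐄' = Σ_a (E'(λ_a)/(2λ_a)) ⟨N_a, C' N_a⟩ N_a N_aᵀ + Σ_{a<b} [(E(λ_a) − E(λ_b))/(λ_a² − λ_b²)] ⟨N_a, C' N_b⟩ (N_a N_bᵀ + N_b N_aᵀ); that is, 𝐄' = ½ 𝕼(C') where 𝕼 is the projection operator of Hill's framework associated with (λ_a; N_a; E). -/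

import Mathlib

open Matrix Filter Finset

attribute [local instance] Matrix.frobeniusNormedAddCommGroup Matrix.frobeniusNormedSpace

theorem entryDeriv' {C : ℝ → Matrix (Fin 3) (Fin 3) ℝ} {C' : Matrix (Fin 3) (Fin 3) ℝ} {t₀ : ℝ}
    (hC : HasDerivAt C C' t₀) (i j : Fin 3) :
    HasDerivAt (fun t => C t i j) (C' i j) t₀ := by
  rw [hasDerivAt_iff_tendsto_slope]
  replace hC := (hasDerivAt_iff_tendsto_slope (f := C) (f' := C') (x := t₀)).mp hC
  have hcont : Continuous (fun A : Matrix (Fin 3) (Fin 3) ℝ => A i j) :=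
    (continuous_apply j).comp (continuous_apply i)
  have := (hcont.tendsto C').comp hC
  convert this using 2
  funext t
  simp [slope]

theorem dotDeriv' {f g : ℝ → Fin 3 → ℝ} {f' g' : Fin 3 → ℝ} {t₀ : ℝ}
    (hf : HasDerivAt f f' t₀) (hg : HasDerivAt g g' t₀) :
    HasDerivAt (fun t => f t ⬝ᵥ g t) (f' ⬝ᵥ g t₀ + f t₀ ⬝ᵥ g') t₀ := by
  simp only [dotProduct, ← Finset.sum_add_distrib]
  exact HasDerivAt.fun_sum fun i _ =>
    ((hasDerivAt_pi.mp hf i).mul (hasDerivAt_pi.mp hg i))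

theorem mulVecDeriv' {C : ℝ → Matrix (Fin 3) (Fin 3) ℝ} {C' : Matrix (Fin 3) (Fin 3) ℝ}
    {v : ℝ → Fin 3 → ℝ} {v' : Fin 3 → ℝ} {t₀ : ℝ}
    (hC : HasDerivAt C C' t₀) (hv : HasDerivAt v v' t₀) :
    HasDerivAt (fun t => C t *ᵥ v t) (C' *ᵥ v t₀ + C t₀ *ᵥ v') t₀ := by
  rw [hasDerivAt_pi]
  intro i
  simp only [mulVec, dotProduct, Pi.add_apply]
  rw [← Finset.sum_add_distrib]
  exact HasDerivAt.fun_sum fun j _ => ((entryDeriv' hC i j).mul (hasDerivAt_pi.mp hv j))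

theorem vecMulVec_decomp' (u v : Fin 3 → ℝ) :
    vecMulVec u v = ∑ i, ∑ j, (u i * v j) • Matrix.single i j (1:ℝ) := by
  conv_lhs => rw [matrix_eq_sum_single (vecMulVec u v)]
  simp [vecMulVec_apply, smul_single]

theorem vecMulVecDeriv' {f g : ℝ → Fin 3 → ℝ} {f' g' : Fin 3 → ℝ} {t₀ : ℝ}
    (hf : HasDerivAt f f' t₀) (hg : HasDerivAt g g' t₀) :
    HasDerivAt (fun t => vecMulVec (f t) (g t))
      (vecMulVec f' (g t₀) + vecMulVec (f t₀) g') t₀ := by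
  simp only [vecMulVec_decomp', ← Finset.sum_add_distrib, ← add_smul]
  exact HasDerivAt.fun_sum fun i _ => HasDerivAt.fun_sum fun j _ =>
    (((hasDerivAt_pi.mp hf i).mul (hasDerivAt_pi.mp hg j)).smul_const _)

theorem sum3' {M : Type*} [AddCommMonoid M] (F : Fin 3 → Fin 3 → M) :
    ∑ a, ∑ b, F a b
      = (∑ a, F a a) + ∑ a, ∑ b ∈ univ.filter (fun b => a < b), (F a b + F b a) := by
  simp only [Finset.sum_filter, Fin.sum_univ_three]
  norm_num [Fin.lt_def]
  abel

theorem vecMulVec_sum_left' (v : Fin 3 → ℝ) (w : Fin 3 → Fin 3 → ℝ) :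
    vecMulVec (∑ b, w b) v = ∑ b, vecMulVec (w b) v := by
  ext k l
  simp [vecMulVec_apply, Matrix.sum_apply, Finset.sum_mul]

theorem vecMulVec_smul_left' (c : ℝ) (u v : Fin 3 → ℝ) :
    vecMulVec (c • u) v = c • vecMulVec u v := by
  ext k l; simp [vecMulVec_apply, mul_assoc]

theorem vecMulVec_sum_right' (v : Fin 3 → ℝ) (w : Fin 3 → Fin 3 → ℝ) :
    vecMulVec v (∑ b, w b) = ∑ b, vecMulVec v (w b) := by
  ext k l
  simp [vecMulVec_apply, Matrix.sum_apply, Finset.mul_sum]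

theorem vecMulVec_smul_right' (c : ℝ) (u v : Fin 3 → ℝ) :
    vecMulVec v (c • u) = c • vecMulVec v u := by
  ext k l; simp [vecMulVec_apply]; ring

theorem complete' (V : Fin 3 → Fin 3 → ℝ)
    (hV : ∀ a b, V a ⬝ᵥ V b = if a = b then (1:ℝ) else 0) (w : Fin 3 → ℝ) :
    ∑ b, (V b ⬝ᵥ w) • V b = w := by
  have hPT : (Matrix.of fun i j => V j i)ᵀ * (Matrix.of fun i j => V j i) = 1 := by
    ext a b
    simpa [Matrix.mul_apply, Matrix.one_apply, dotProduct] using hV a b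
  have hP := mul_eq_one_comm.mp hPT
  have key : ∀ i j, (∑ b, V b i * V b j) = if i = j then (1:ℝ) else 0 := by
    intro i j
    have := congrFun (congrFun hP i) j
    simpa [Matrix.mul_apply, Matrix.one_apply] using this
  funext i
  rw [Finset.sum_apply]
  simp only [Pi.smul_apply, smul_eq_mul, dotProduct, Finset.sum_mul]
  rw [Finset.sum_comm]
  calc ∑ j, ∑ b, V b j * w j * V b i
      = ∑ j, (∑ b, V b i * V b j) * w j := by
        refine Finset.sum_congr rfl fun j _ => ?_
        rw [Finset.sum_mul]
        exact Finset.sum_congr rfl fun b _ => by ring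
    _ = w i := by simp [key, ite_mul]

theorem symswap' (M : Matrix (Fin 3) (Fin 3) ℝ) (hM : ∀ i j, M i j = M j i)
    (u v : Fin 3 → ℝ) : u ⬝ᵥ M *ᵥ v = v ⬝ᵥ M *ᵥ u := by
  simp only [dotProduct, mulVec, Finset.mul_sum]
  rw [Finset.sum_comm]
  refine Finset.sum_congr rfl fun j _ => Finset.sum_congr rfl fun i _ => ?_
  rw [hM i j]; ring
/-- The projection operator of Hill's framework associated with principal values `a`,
principal directions `V`, a scale function `f` and its derivative `f'`. -/
noncomputable def projOp (a : Fin 3 → ℝ) (V : Fin 3 → Fin 3 → ℝ) (f f' : ℝ → ℝ)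
    (A : Matrix (Fin 3) (Fin 3) ℝ) : Matrix (Fin 3) (Fin 3) ℝ :=
  (∑ i, ((f' (a i) / a i) * (V i ⬝ᵥ A *ᵥ V i)) • vecMulVec (V i) (V i)) +
    ∑ i, ∑ j ∈ univ.filter (fun j => i < j),
      ((2 * (f (a i) - f (a j)) / ((a i) ^ 2 - (a j) ^ 2)) * (V i ⬝ᵥ A *ᵥ V j)) •
        (vecMulVec (V i) (V j) + vecMulVec (V j) (V i))

/-- Under the eigen-decomposition hypotheses with pairwise distinct
squared stretches at `t₀` and a differentiable scale function `E`: (i) the squared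
stretches satisfy `(λ_a²)' = ⟨N_a, C' N_a⟩`; (ii) the generalized strain curve
`𝐄(t) = Σ_a E(λ_a(t)) N_a(t) N_a(t)ᵀ` has derivative
`Σ_a (E'(λ_a)/(2λ_a)) ⟨N_a, C' N_a⟩ M_a + Σ_{a<b} [(E(λ_a)−E(λ_b))/(λ_a²−λ_b²)]
⟨N_a, C' N_b⟩ (N_a N_bᵀ + N_b N_aᵀ)`, which equals `½ 𝕼(C')`. -/
theorem generalized_strain_derivative
    (C : ℝ → Matrix (Fin 3) (Fin 3) ℝ) (C' : Matrix (Fin 3) (Fin 3) ℝ)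
    (lam : Fin 3 → ℝ → ℝ) (lam' : Fin 3 → ℝ)
    (N : Fin 3 → ℝ → (Fin 3 → ℝ)) (N' : Fin 3 → (Fin 3 → ℝ)) (t₀ : ℝ)
    (hCsym : ∀ t, (C t).IsSymm)
    (hC : HasDerivAt C C' t₀)
    (hlam : ∀ a, HasDerivAt (lam a) (lam' a) t₀)
    (hlampos : ∀ a t, 0 < lam a t)
    (hN : ∀ a, HasDerivAt (N a) (N' a) t₀)
    (heig : ∀ a, ∀ᶠ t in nhds t₀, (C t) *ᵥ (N a t) = ((lam a t) ^ 2) • N a t)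
    (hON : ∀ a b, ∀ᶠ t in nhds t₀, N a t ⬝ᵥ N b t = if a = b then (1 : ℝ) else 0)
    (hdist : ∀ a b, a ≠ b → (lam a t₀) ^ 2 ≠ (lam b t₀) ^ 2)
    (E E' : ℝ → ℝ)
    (hE : ∀ x : ℝ, 0 < x → HasDerivAt E (E' x) x) :
    (∀ a, HasDerivAt (fun t => (lam a t) ^ 2) (N a t₀ ⬝ᵥ (C' *ᵥ N a t₀)) t₀) ∧
    (HasDerivAt (fun t => ∑ a, E (lam a t) • vecMulVec (N a t) (N a t))
      ((∑ a, ((E' (lam a t₀) / (2 * lam a t₀)) * (N a t₀ ⬝ᵥ (C' *ᵥ N a t₀))) •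
          vecMulVec (N a t₀) (N a t₀)) +
        ∑ a, ∑ b ∈ univ.filter (fun b => a < b),
          (((E (lam a t₀) - E (lam b t₀)) / ((lam a t₀) ^ 2 - (lam b t₀) ^ 2)) *
              (N a t₀ ⬝ᵥ (C' *ᵥ N b t₀))) •
            (vecMulVec (N a t₀) (N b t₀) + vecMulVec (N b t₀) (N a t₀))) t₀) ∧
    ((∑ a, ((E' (lam a t₀) / (2 * lam a t₀)) * (N a t₀ ⬝ᵥ (C' *ᵥ N a t₀))) •
          vecMulVec (N a t₀) (N a t₀)) +
        ∑ a, ∑ b ∈ univ.filter (fun b => a < b),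
          (((E (lam a t₀) - E (lam b t₀)) / ((lam a t₀) ^ 2 - (lam b t₀) ^ 2)) *
              (N a t₀ ⬝ᵥ (C' *ᵥ N b t₀))) •
            (vecMulVec (N a t₀) (N b t₀) + vecMulVec (N b t₀) (N a t₀))
      = (1 / 2 : ℝ) • projOp (fun a => lam a t₀) (fun a => N a t₀) E E' C') := by
  have hL : ∀ a, lam a t₀ ≠ 0 := fun a => (hlampos a t₀).ne'
  -- orthonormality at t₀ and its derivative
  have hVON : ∀ a b, N a t₀ ⬝ᵥ N b t₀ = if a = b then (1:ℝ) else 0 :=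
    fun a b => (hON a b).self_of_nhds
  have hONd : ∀ a b, N' a ⬝ᵥ N b t₀ + N a t₀ ⬝ᵥ N' b = 0 := by
    intro a b
    have h1 : HasDerivAt (fun t => N a t ⬝ᵥ N b t) (N' a ⬝ᵥ N b t₀ + N a t₀ ⬝ᵥ N' b) t₀ :=
      dotDeriv' (hN a) (hN b)
    have h2 : HasDerivAt (fun t => N a t ⬝ᵥ N b t) 0 t₀ :=
      (hasDerivAt_const t₀ (if a = b then (1:ℝ) else 0)).congr_of_eventuallyEq (hON a b)
    exact h1.unique h2
  have hdiag0 : ∀ a, N a t₀ ⬝ᵥ N' a = 0 := by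
    intro a
    have := hONd a a
    rw [dotProduct_comm (N' a)] at this
    linarith
  -- symmetry of C' and C t₀
  have hC0sym : ∀ i j, C t₀ i j = C t₀ j i := by
    intro i j
    have := congrFun (congrFun (hCsym t₀) j) i
    simpa [Matrix.transpose_apply] using this
  have hC'sym : ∀ i j, C' i j = C' j i := by
    intro i j
    have h1 := entryDeriv' hC i j
    have h3 := entryDeriv' hC j i
    have heq : (fun t => C t j i) = (fun t => C t i j) := by
      funext t
      have := congrFun (congrFun (hCsym t) i) j
      simpa [Matrix.transpose_apply] using this
    rw [heq] at h3
    exact h1.unique h3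
  -- key vector equation from differentiating the eigen-equation
  have hlam2 : ∀ a, HasDerivAt (fun t => (lam a t)^2) (2 * lam a t₀ * lam' a) t₀ := by
    intro a
    have : HasDerivAt (fun t => (lam a t)^2) _ t₀ := (hlam a).fun_pow 2
    convert this using 1
    ring
  have keyV : ∀ a, C' *ᵥ N a t₀ + C t₀ *ᵥ N' a
      = (2 * lam a t₀ * lam' a) • N a t₀ + ((lam a t₀)^2) • N' a := by
    intro a
    have hF : HasDerivAt (fun t => C t *ᵥ N a t) (C' *ᵥ N a t₀ + C t₀ *ᵥ N' a) t₀ :=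
      mulVecDeriv' hC (hN a)
    have hG : HasDerivAt (fun t => ((lam a t)^2) • N a t)
        (((lam a t₀)^2) • N' a + (2 * lam a t₀ * lam' a) • N a t₀) t₀ :=
      (hlam2 a).smul (hN a)
    have hF2 : HasDerivAt (fun t => C t *ᵥ N a t)
        (((lam a t₀)^2) • N' a + (2 * lam a t₀ * lam' a) • N a t₀) t₀ :=
      hG.congr_of_eventuallyEq (heig a)
    rw [hF.unique hF2]
    abel
  have heig0 : ∀ a, C t₀ *ᵥ N a t₀ = ((lam a t₀)^2) • N a t₀ :=
    fun a => (heig a).self_of_nhds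
  -- dot the key equation with N b t₀
  have keyS : ∀ a b, N b t₀ ⬝ᵥ C' *ᵥ N a t₀ + ((lam b t₀)^2) * (N b t₀ ⬝ᵥ N' a)
      = (2 * lam a t₀ * lam' a) * (if b = a then (1:ℝ) else 0)
        + ((lam a t₀)^2) * (N b t₀ ⬝ᵥ N' a) := by
    intro a b
    have h := congrArg (fun w => N b t₀ ⬝ᵥ w) (keyV a)
    simp only [dotProduct_add, dotProduct_smul, smul_eq_mul] at h
    have hswap : N b t₀ ⬝ᵥ C t₀ *ᵥ N' a = ((lam b t₀)^2) * (N b t₀ ⬝ᵥ N' a) := by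
      rw [symswap' (C t₀) hC0sym, heig0 b, dotProduct_smul, smul_eq_mul, dotProduct_comm]
    rw [hswap, hVON b a] at h
    exact h
  have key1 : ∀ a, 2 * lam a t₀ * lam' a = N a t₀ ⬝ᵥ C' *ᵥ N a t₀ := by
    intro a
    have h := keyS a a
    rw [if_pos rfl] at h
    linarith
  have key2 : ∀ a b, b ≠ a →
      N b t₀ ⬝ᵥ C' *ᵥ N a t₀ = ((lam a t₀)^2 - (lam b t₀)^2) * (N b t₀ ⬝ᵥ N' a) := by
    intro a b hba
    have := keyS a b
    rw [if_neg hba] at this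
    ring_nf at this ⊢
    linarith
  have hC'swap : ∀ u v, u ⬝ᵥ C' *ᵥ v = v ⬝ᵥ C' *ᵥ u := symswap' C' hC'sym
  -- Part 1
  have part1 : ∀ a, HasDerivAt (fun t => (lam a t) ^ 2) (N a t₀ ⬝ᵥ (C' *ᵥ N a t₀)) t₀ := by
    intro a
    have := hlam2 a
    rwa [key1 a] at this
  -- Part 2: raw derivative
  have hEd : ∀ a, HasDerivAt (fun t => E (lam a t)) (E' (lam a t₀) * lam' a) t₀ := by
    intro a
    have := (hE (lam a t₀) (hlampos a t₀)).comp t₀ (hlam a)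
    exact this
  have hraw : ∀ a, HasDerivAt (fun t => E (lam a t) • vecMulVec (N a t) (N a t))
      ((E' (lam a t₀) * lam' a) • vecMulVec (N a t₀) (N a t₀)
        + E (lam a t₀) • (vecMulVec (N' a) (N a t₀) + vecMulVec (N a t₀) (N' a))) t₀ := by
    intro a
    have : HasDerivAt (fun t => E (lam a t) • vecMulVec (N a t) (N a t)) _ t₀ :=
      (hEd a).smul (vecMulVecDeriv' (hN a) (hN a))
    convert this using 1
    abel
  have hsum : HasDerivAt (fun t => ∑ a, E (lam a t) • vecMulVec (N a t) (N a t))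
      (∑ a, ((E' (lam a t₀) * lam' a) • vecMulVec (N a t₀) (N a t₀)
        + E (lam a t₀) • (vecMulVec (N' a) (N a t₀) + vecMulVec (N a t₀) (N' a)))) t₀ :=
    HasDerivAt.fun_sum fun a _ => hraw a
  -- the algebraic identification of the derivative
  have halg : (∑ a, ((E' (lam a t₀) * lam' a) • vecMulVec (N a t₀) (N a t₀)
        + E (lam a t₀) • (vecMulVec (N' a) (N a t₀) + vecMulVec (N a t₀) (N' a))))
      = (∑ a, ((E' (lam a t₀) / (2 * lam a t₀)) * (N a t₀ ⬝ᵥ (C' *ᵥ N a t₀))) •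
          vecMulVec (N a t₀) (N a t₀)) +
        ∑ a, ∑ b ∈ univ.filter (fun b => a < b),
          (((E (lam a t₀) - E (lam b t₀)) / ((lam a t₀) ^ 2 - (lam b t₀) ^ 2)) *
              (N a t₀ ⬝ᵥ (C' *ᵥ N b t₀))) •
            (vecMulVec (N a t₀) (N b t₀) + vecMulVec (N b t₀) (N a t₀)) := by
    rw [Finset.sum_add_distrib]
    congr 1
    · refine Finset.sum_congr rfl fun a _ => ?_
      congr 1
      rw [← key1 a]
      field_simp [hL a]
    · -- expand N' a in the basis
      have hexp : ∀ a, E (lam a t₀) • (vecMulVec (N' a) (N a t₀) + vecMulVec (N a t₀) (N' a))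
          = ∑ b, (E (lam a t₀) * (N b t₀ ⬝ᵥ N' a)) •
              (vecMulVec (N b t₀) (N a t₀) + vecMulVec (N a t₀) (N b t₀)) := by
        intro a
        conv_lhs => rw [← complete' (fun b => N b t₀) hVON (N' a)]
        rw [vecMulVec_sum_left', vecMulVec_sum_right', ← Finset.sum_add_distrib,
          Finset.smul_sum]
        refine Finset.sum_congr rfl fun b _ => ?_
        rw [vecMulVec_smul_left', vecMulVec_smul_right', ← smul_add, smul_smul]
      simp only [hexp]
      rw [sum3']
      have hdiag : (∑ a, (E (lam a t₀) * (N a t₀ ⬝ᵥ N' a)) •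
          (vecMulVec (N a t₀) (N a t₀) + vecMulVec (N a t₀) (N a t₀))) = 0 := by
        refine Finset.sum_eq_zero fun a _ => ?_
        rw [hdiag0 a]
        simp
      rw [hdiag, zero_add]
      refine Finset.sum_congr rfl fun a _ => Finset.sum_congr rfl fun b hb => ?_
      have hab : a ≠ b := (Finset.mem_filter.mp hb).2.ne
      have hd : (lam a t₀)^2 - (lam b t₀)^2 ≠ 0 := sub_ne_zero_of_ne (hdist a b hab)
      have hd' : (lam b t₀)^2 - (lam a t₀)^2 ≠ 0 := sub_ne_zero_of_ne (hdist b a hab.symm)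
      have e1 : N b t₀ ⬝ᵥ N' a = (N a t₀ ⬝ᵥ C' *ᵥ N b t₀) / ((lam a t₀)^2 - (lam b t₀)^2) := by
        have h := key2 a b hab.symm
        rw [hC'swap] at h
        rw [h, mul_div_cancel_left₀ _ hd]
      have e2 : N a t₀ ⬝ᵥ N' b = (N a t₀ ⬝ᵥ C' *ᵥ N b t₀) / ((lam b t₀)^2 - (lam a t₀)^2) := by
        have h := key2 b a hab
        rw [h, mul_div_cancel_left₀ _ hd']
      rw [e1, e2]
      rw [add_comm (vecMulVec (N b t₀) (N a t₀)) (vecMulVec (N a t₀) (N b t₀)), ← add_smul]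
      congr 1
      generalize N a t₀ ⬝ᵥ C' *ᵥ N b t₀ = x
      field_simp
      ring
  refine ⟨part1, ?_, ?_⟩
  · rw [← halg]; exact hsum
  · -- Part 3: relation to the projection operator
    simp only [projOp]
    rw [smul_add, Finset.smul_sum, Finset.smul_sum]
    congr 1
    · refine Finset.sum_congr rfl fun a _ => ?_
      rw [smul_smul]
      congr 1
      ring
    · refine Finset.sum_congr rfl fun a _ => ?_
      rw [Finset.smul_sum]
      refine Finset.sum_congr rfl fun b _ => ?_
      rw [smul_smul]
      congr 1
      ring
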